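/- Let I be a family of pairwise disjoint intervals in the full binary tree and call an interval I ∈ 𝕀 a record breaker if it is strictly longer than all intervals of 𝕀 whose sources are ancestors of the source of I. Then almost surely, a random branch visits targets of record breakers only finitely often. (Key estimate: the probability of the set A_n of branches that see the target of some record breaker after already having seen at least n sources of record breakers is at most 2^(-n), since the n-th record breaker on any branch has length at least n.) -/

import Mathlib

open MeasureTheory ENNReal

/-- The cylinder of branches extending the finite word `x`. -/
def cylinder (x : List Bool) : Set (ℕ → Bool) :=
  {π | ∀ i : Fin x.length, π i = x.get i}

/-- A branch visits the set of nodes `S` infinitely often. -/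
def visitsIO (S : Set (List Bool)) (π : ℕ → Bool) : Prop :=
  {z ∈ S | π ∈ cylinder z}.Infinite

/-- The set of nodes of the interval `[p.1, p.2]`. -/
def intervalSet (p : List Bool × List Bool) : Set (List Bool) :=
  {z | p.1 <+: z ∧ z <+: p.2}

/-- The length of an interval: the number of nodes strictly between source and target. -/
def intervalLen (p : List Bool × List Bool) : ℕ :=
  p.2.length - p.1.length - 1

/-- A family of pairwise disjoint intervals in the full binary tree. -/
def IsIntervalFamily (I : Set (List Bool × List Bool)) : Prop :=
  (∀ p ∈ I, p.1 <+: p.2 ∧ p.1 ≠ p.2) ∧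
  (∀ p ∈ I, ∀ q ∈ I, p ≠ q → intervalSet p ∩ intervalSet q = ∅)

/-- An interval of the family is a record breaker if it is strictly longer than all
intervals of the family whose sources are strict ancestors of its source. -/
def RecordBreaker (I : Set (List Bool × List Bool)) (p : List Bool × List Bool) : Prop :=
  p ∈ I ∧ ∀ q ∈ I, (q.1 <+: p.1 ∧ q.1 ≠ p.1) → intervalLen q < intervalLen p

lemma cylinder_measurable (x : List Bool) : MeasurableSet (cylinder x) := by
  have : _root_.cylinder x = ⋂ i : Fin x.length, (fun π : ℕ → Bool => π i) ⁻¹' {x.get i} := by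
    ext π; simp [_root_.cylinder]
  rw [this]
  exact MeasurableSet.iInter fun i =>
    (measurable_pi_apply _) (MeasurableSet.singleton _)

lemma cylinder_disj {x y : List Bool} (hx : ¬ x <+: y) (hy : ¬ y <+: x) :
    Disjoint (cylinder x) (cylinder y) := by
  rw [Set.disjoint_left]
  intro π hπx hπy
  rcases le_total x.length y.length with h | h
  · apply hx
    rw [List.prefix_iff_eq_take]
    apply List.ext_get (by simp [h])
    intro n h1 h2
    have e1 := hπx ⟨n, h1⟩
    have e2 := hπy ⟨n, lt_of_lt_of_le h1 h⟩
    simp only [List.get_eq_getElem] at *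
    rw [← e1, List.getElem_take, ← e2]
  · apply hy
    rw [List.prefix_iff_eq_take]
    apply List.ext_get (by simp [h])
    intro n h1 h2
    have e1 := hπy ⟨n, h1⟩
    have e2 := hπx ⟨n, lt_of_lt_of_le h1 h⟩
    simp only [List.get_eq_getElem] at *
    rw [← e1, List.getElem_take, ← e2]

section Rank
variable {I : Set (List Bool × List Bool)} (hI : IsIntervalFamily I)

def ancSet (I : Set (List Bool × List Bool)) (p : List Bool × List Bool) :
    Set (List Bool × List Bool) :=
  {q | RecordBreaker I q ∧ q.1 <+: p.1 ∧ q.1 ≠ p.1}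

noncomputable def rbRank (I : Set (List Bool × List Bool)) (p : List Bool × List Bool) : ℕ :=
  (ancSet I p).ncard

include hI

lemma src_mem_intervalSet {p : List Bool × List Bool} (hp : p ∈ I) : p.1 ∈ intervalSet p :=
  ⟨List.prefix_rfl, (hI.1 p hp).1⟩

lemma eq_of_src {p q : List Bool × List Bool} (hp : p ∈ I) (hq : q ∈ I) (h : p.1 = q.1) :
    p = q := by
  by_contra hne
  have := hI.2 p hp q hq hne
  have h1 : p.1 ∈ intervalSet p ∩ intervalSet q := by
    refine ⟨src_mem_intervalSet hI hp, ?_⟩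
    rw [h]; exact src_mem_intervalSet hI hq
  rw [this] at h1
  exact h1

lemma ancSet_finite (p : List Bool × List Bool) : (ancSet I p).Finite := by
  have hinj : Set.InjOn (fun q => q.1) (ancSet I p) := by
    intro q hq q' hq' h
    exact eq_of_src hI hq.1.1 hq'.1.1 h
  apply Set.Finite.of_finite_image ?_ hinj
  apply Set.Finite.subset (Set.Finite.image (fun n => p.1.take n) (Set.finite_Iic p.1.length))
  rintro z ⟨q, hq, rfl⟩
  exact ⟨q.1.length, hq.2.1.length_le, (List.prefix_iff_eq_take.mp hq.2.1).symm⟩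

lemma rank_le_len {p : List Bool × List Bool} (hp : RecordBreaker I p) :
    rbRank I p ≤ intervalLen p := by
  have hinj : Set.InjOn intervalLen (ancSet I p) := by
    intro q hq q' hq' h
    rcases List.prefix_or_prefix_of_prefix hq.2.1 hq'.2.1 with hpre | hpre
    · rcases eq_or_ne q.1 q'.1 with he | hne
      · exact eq_of_src hI hq.1.1 hq'.1.1 he
      · exact absurd h (Nat.ne_of_lt (hq'.1.2 q hq.1.1 ⟨hpre, hne⟩))
    · rcases eq_or_ne q'.1 q.1 with he | hne
      · exact (eq_of_src hI hq'.1.1 hq.1.1 he).symm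
      · exact absurd h.symm (Nat.ne_of_lt (hq.1.2 q' hq'.1.1 ⟨hpre, hne⟩))
  have h1 : rbRank I p = (intervalLen '' ancSet I p).ncard :=
    (Set.ncard_image_of_injOn hinj).symm
  rw [h1]
  have h2 : intervalLen '' ancSet I p ⊆ Set.Iio (intervalLen p) := by
    rintro n ⟨q, hq, rfl⟩
    exact hp.2 q hq.1.1 hq.2
  calc (intervalLen '' ancSet I p).ncard ≤ (Set.Iio (intervalLen p)).ncard :=
        Set.ncard_le_ncard h2 (Set.finite_Iio _)
    _ = intervalLen p := by
        rw [← Finset.coe_range, Set.ncard_coe_finset, Finset.card_range]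

lemma rank_lt_rank {p q : List Bool × List Bool} (hp : RecordBreaker I p)
    (hq : RecordBreaker I q) (hpre : q.1 <+: p.1) (hne : q.1 ≠ p.1) :
    rbRank I q < rbRank I p := by
  have hsub : insert q (ancSet I q) ⊆ ancSet I p := by
    rintro r (rfl | hr)
    · exact ⟨hq, hpre, hne⟩
    · refine ⟨hr.1, hr.2.1.trans hpre, ?_⟩
      intro he
      have h1 : p.1.length ≤ q.1.length := he ▸ hr.2.1.length_le
      have h2 : q.1 = p.1 := hpre.eq_of_length (le_antisymm hpre.length_le h1)
      exact hne h2
  have hq_not : q ∉ ancSet I q := fun h => h.2.2 rfl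
  calc rbRank I q < (insert q (ancSet I q)).ncard := by
        rw [Set.ncard_insert_of_notMem hq_not ((ancSet_finite hI q))]
        exact Nat.lt_succ_self _
    _ ≤ rbRank I p := Set.ncard_le_ncard hsub (ancSet_finite hI p)

lemma incomp_of_rank_eq {p q : List Bool × List Bool} (hp : RecordBreaker I p)
    (hq : RecordBreaker I q) (hne : p ≠ q) (h : rbRank I p = rbRank I q) :
    ¬ p.1 <+: q.1 ∧ ¬ q.1 <+: p.1 := by
  constructor
  · intro hpre
    rcases eq_or_ne p.1 q.1 with he | hne1
    · exact hne (eq_of_src hI hp.1 hq.1 he)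
    · exact absurd h (Nat.ne_of_lt (rank_lt_rank hI hq hp hpre hne1))
  · intro hpre
    rcases eq_or_ne q.1 p.1 with he | hne1
    · exact hne (eq_of_src hI hp.1 hq.1 he.symm)
    · exact absurd h.symm (Nat.ne_of_lt (rank_lt_rank hI hp hq hpre hne1))

end Rank

lemma key_tsum (μ : Measure (ℕ → Bool)) [IsProbabilityMeasure μ]
    (hμ : ∀ x : List Bool, μ (cylinder x) = (2 : ℝ≥0∞)⁻¹ ^ x.length)
    {I : Set (List Bool × List Bool)} (hI : IsIntervalFamily I) :
    ∑' p : {p // RecordBreaker I p}, μ (cylinder p.val.2) ≠ ∞ := by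
  have hhalf : (2 : ℝ≥0∞)⁻¹ ≤ 1 := ENNReal.inv_le_one.mpr one_le_two
  have hbound : ∀ p : {p // RecordBreaker I p},
      μ (cylinder p.val.2) ≤ 2⁻¹ ^ (rbRank I p.val + 1) * μ (cylinder p.val.1) := by
    intro p
    have hpre := (hI.1 p.val p.2.1).1
    have hne := (hI.1 p.val p.2.1).2
    have hlt : p.val.1.length < p.val.2.length :=
      lt_of_le_of_ne hpre.length_le (fun h => hne (hpre.eq_of_length h))
    have hlen : p.val.2.length = (intervalLen p.val + 1) + p.val.1.length := by
      unfold intervalLen; omega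
    rw [hμ, hμ, hlen, pow_add]
    apply mul_le_mul_left
    exact pow_le_pow_of_le_one zero_le hhalf
      (Nat.succ_le_succ (rank_le_len hI p.2))
  have step1 : ∑' p : {p // RecordBreaker I p}, μ (cylinder p.val.2) ≤
      ∑' p : {p // RecordBreaker I p}, 2⁻¹ ^ (rbRank I p.val + 1) * μ (cylinder p.val.1) :=
    ENNReal.tsum_le_tsum hbound
  set g : {p // RecordBreaker I p} → ℝ≥0∞ :=
    fun p => 2⁻¹ ^ (rbRank I p.val + 1) * μ (cylinder p.val.1) with hg
  have step2 : ∑' p, g p = ∑' k : ℕ, ∑' q : {p : {p // RecordBreaker I p} // rbRank I p.val = k},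
      g q.val := by
    rw [← (Equiv.sigmaFiberEquiv (fun p : {p // RecordBreaker I p} => rbRank I p.val)).tsum_eq g]
    exact ENNReal.tsum_sigma' _
  have step3 : ∀ k : ℕ, ∑' q : {p : {p // RecordBreaker I p} // rbRank I p.val = k}, g q.val ≤
      2⁻¹ ^ (k + 1) := by
    intro k
    have heq : ∀ q : {p : {p // RecordBreaker I p} // rbRank I p.val = k},
        g q.val = 2⁻¹ ^ (k + 1) * μ (cylinder q.val.val.1) := by
      intro q; rw [hg]; simp only; rw [q.2]
    rw [tsum_congr heq, ENNReal.tsum_mul_left]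
    have hdisj : Pairwise (Function.onFun Disjoint
        (fun q : {p : {p // RecordBreaker I p} // rbRank I p.val = k} =>
          cylinder q.val.val.1)) := by
      intro q q' hne
      have hne2 : q.val.val ≠ q'.val.val := by
        intro h
        exact hne (Subtype.ext (Subtype.ext h))
      have hrank : rbRank I q.val.val = rbRank I q'.val.val := by rw [q.2, q'.2]
      obtain ⟨h1, h2⟩ := incomp_of_rank_eq hI q.val.2 q'.val.2 hne2 hrank
      exact cylinder_disj h1 h2
    have hsum : ∑' q : {p : {p // RecordBreaker I p} // rbRank I p.val = k},
        μ (cylinder q.val.val.1) ≤ 1 := by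
      rw [← measure_iUnion hdisj (fun q => cylinder_measurable _)]
      exact prob_le_one
    calc 2⁻¹ ^ (k + 1) * ∑' q : {p : {p // RecordBreaker I p} // rbRank I p.val = k},
        μ (cylinder q.val.val.1) ≤ 2⁻¹ ^ (k + 1) * 1 := mul_le_mul_right hsum _
      _ = 2⁻¹ ^ (k + 1) := mul_one _
  have step4 : ∑' k : ℕ, ((2 : ℝ≥0∞)⁻¹ ^ (k + 1)) ≤ 2 := by
    have : ∑' k : ℕ, ((2 : ℝ≥0∞)⁻¹ ^ (k + 1)) ≤ ∑' k : ℕ, ((2 : ℝ≥0∞)⁻¹ ^ k) :=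
      ENNReal.tsum_le_tsum fun k => pow_le_pow_of_le_one zero_le hhalf (Nat.le_succ k)
    refine this.trans ?_
    rw [ENNReal.tsum_geometric, ENNReal.one_sub_inv_two, inv_inv]
  have : ∑' p : {p // RecordBreaker I p}, μ (cylinder p.val.2) ≤ 2 := by
    refine step1.trans ?_
    rw [step2]
    exact (ENNReal.tsum_le_tsum step3).trans step4
  exact ne_top_of_le_ne_top (by norm_num) this

/-- Almost surely, a branch visits targets of record breakers only finitely often. -/
theorem record_breaker_targets_finitely_often (μ : Measure (ℕ → Bool))
    [IsProbabilityMeasure μ]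
    (hμ : ∀ x : List Bool, μ (cylinder x) = (2 : ℝ≥0∞)⁻¹ ^ x.length)
    (I : Set (List Bool × List Bool)) (hI : IsIntervalFamily I) :
    μ {π | {z ∈ Prod.snd '' {p | RecordBreaker I p} | π ∈ cylinder z}.Finite} = 1 := by
  have hae : ∀ᵐ π ∂μ, {p : {p // RecordBreaker I p} | π ∈ cylinder p.val.2}.Finite :=
    ae_finite_setOf_mem (key_tsum μ hμ hI)
  have hsub : ∀ π : ℕ → Bool, {p : {p // RecordBreaker I p} | π ∈ cylinder p.val.2}.Finite →
      {z ∈ Prod.snd '' {p | RecordBreaker I p} | π ∈ cylinder z}.Finite := by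
    intro π h
    have himg : {z ∈ Prod.snd '' {p | RecordBreaker I p} | π ∈ cylinder z} ⊆
        (fun p : {p // RecordBreaker I p} => p.val.2) ''
          {p : {p // RecordBreaker I p} | π ∈ cylinder p.val.2} := by
      rintro z ⟨⟨p, hp, rfl⟩, hz⟩
      exact ⟨⟨p, hp⟩, hz, rfl⟩
    exact ((h.image _).subset himg)
  have hae2 : ∀ᵐ π ∂μ,
      π ∈ {π | {z ∈ Prod.snd '' {p | RecordBreaker I p} | π ∈ cylinder z}.Finite} :=
    hae.mono fun π h => hsub π h
  have : {π | {z ∈ Prod.snd '' {p | RecordBreaker I p} | π ∈ cylinder z}.Finite} =ᵐ[μ]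
      (Set.univ : Set (ℕ → Bool)) := by
    rw [Filter.eventuallyEq_univ]
    exact hae2
  rw [measure_congr this, measure_univ]
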